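/- For every integer n ≥ 1, p_{4n,μ}(1,-1) = μ · 2^{2n} · (Π_{k=n+1}^{2n-1} (μ+k)) / (Π_{k=1}^{n} (μ+k-1/2)). -/

import Mathlib

open Finset

/-- The μ-deformed factorial function γ_μ. -/
noncomputable def gammaMu (μ : ℝ) : ℕ → ℝ
  | 0 => 1
  | n + 1 => ((n + 1 : ℝ) + 2 * μ * (if Odd (n + 1) then 1 else 0)) * gammaMu μ n

/-- The μ-deformed binomial coefficient C_μ(n,k), zero outside 0 ≤ k ≤ n. -/
noncomputable def binomMu (μ : ℝ) (n : ℕ) (k : ℤ) : ℝ :=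
  if 0 ≤ k ∧ k ≤ (n : ℤ) then gammaMu μ n / (gammaMu μ (n - k.toNat) * gammaMu μ k.toNat) else 0

/-- The n-th μ-deformed binomial polynomial p_{n,μ}(x,y). -/
noncomputable def pMu (μ : ℝ) (n : ℕ) (x y : ℂ) : ℂ :=
  ∑ k ∈ Finset.range (n + 1), (binomMu μ n k : ℂ) * x ^ k * y ^ (n - k)

/-- The μ-deformed exponential function. -/
noncomputable def expMu (μ : ℝ) (z : ℂ) : ℂ :=
  ∑' n : ℕ, z ^ n / (gammaMu μ n : ℂ)

/-- The Bessel function of the first kind of order ν, for positive real argument. -/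
noncomputable def besselJ (ν x : ℝ) : ℝ :=
  ∑' m : ℕ, ((-1) ^ m / (Nat.factorial m * Real.Gamma (ν + m + 1))) * (x / 2) ^ ((2 * m : ℝ) + ν)



/-- Rising factorial on ℝ. -/
noncomputable def asc (x : ℝ) : ℕ → ℝ
  | 0 => 1
  | n + 1 => asc x n * (x + n)

lemma asc_zero (x : ℝ) : asc x 0 = 1 := rfl
lemma asc_succ (x : ℝ) (n : ℕ) : asc x (n + 1) = asc x n * (x + n) := rfl

lemma asc_succ' (x : ℝ) (n : ℕ) : asc x (n + 1) = x * asc (x + 1) n := by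
  induction n generalizing x with
  | zero => simp [asc]
  | succ n ih =>
    rw [asc_succ, ih, asc_succ]
    push_cast
    ring

lemma asc_add (x : ℝ) (m n : ℕ) : asc x (m + n) = asc x m * asc (x + m) n := by
  induction n with
  | zero => simp [asc]
  | succ n ih =>
    rw [← Nat.add_assoc, asc_succ, ih, asc_succ]
    push_cast
    ring

lemma asc_pos {x : ℝ} (hx : 0 < x) (n : ℕ) : 0 < asc x n := by
  induction n with
  | zero => norm_num [asc]
  | succ n ih => rw [asc_succ]; positivity

lemma asc_reflect (j : ℕ) (x : ℝ) : asc x j = (-1) ^ j * asc (1 - x - j) j := by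
  induction j generalizing x with
  | zero => simp [asc]
  | succ j ih =>
    rw [asc_succ, ih]
    have h1 : (1 : ℝ) - x - (j+1 : ℕ) = -(x + j) := by push_cast; ring
    rw [h1, asc_succ' (-(x+j)), show -(x+j) + 1 = 1 - x - (j:ℝ) by ring]
    ring

/-- Chu–Vandermonde type identity. -/
lemma cv (m : ℕ) (b c : ℝ) :
    ∑ j ∈ Finset.range (m + 1),
      (-1 : ℝ) ^ j * (m.choose j) * asc b j * asc (c + j) (m - j) = asc (c - b) m := by
  induction m generalizing b c with
  | zero => simp [asc]
  | succ m ih =>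
    have key : ∀ j ∈ Finset.range (m + 1),
        (-1 : ℝ) ^ (j+1) * ((m+1).choose (j+1)) * asc b (j+1) * asc (c + (j+1 : ℕ)) (m + 1 - (j+1))
        = -((-1 : ℝ) ^ j * (m.choose j) * (b * asc (b+1) j) * asc ((c+1) + j) (m - j))
          + -((-1 : ℝ) ^ j * (m.choose (j+1)) * asc b (j+1) * asc (c + (j+1:ℕ)) (m - j)) := by
      intro j hj
      rw [Nat.choose_succ_succ]
      have h1 : m + 1 - (j + 1) = m - j := by omega
      rw [h1, asc_succ' b]
      have h2 : c + ((j+1 : ℕ) : ℝ) = (c + 1) + (j : ℝ) := by push_cast; ring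
      rw [h2]
      push_cast
      ring
    rw [Finset.sum_range_succ' _ (m+1), Finset.sum_congr rfl key, Finset.sum_add_distrib]
    have e1 : ∑ j ∈ Finset.range (m+1),
        -((-1 : ℝ) ^ j * (m.choose j) * (b * asc (b+1) j) * asc ((c+1) + j) (m - j))
        = -(b * asc (c - b) m) := by
      have := ih (b+1) (c+1)
      rw [show (c+1) - (b+1) = c - b by ring] at this
      rw [← this, Finset.mul_sum, ← Finset.sum_neg_distrib]
      exact Finset.sum_congr rfl fun j hj => by ring
    have e2 : (∑ j ∈ Finset.range (m+1),
        -((-1 : ℝ) ^ j * (m.choose (j+1)) * asc b (j+1) * asc (c + (j+1:ℕ)) (m - j)))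
        + (-1 : ℝ) ^ 0 * ((m+1).choose 0) * asc b 0 * asc (c + (0:ℕ)) (m + 1 - 0)
        = (c + m) * asc (c - b) m := by
      have hT : ∑ j ∈ Finset.range (m+1),
          (-1 : ℝ) ^ j * (m.choose j) * asc b j * asc (c + j) ((m - j) + 1)
          = (c + m) * asc (c - b) m := by
        rw [← ih b c, Finset.mul_sum]
        refine Finset.sum_congr rfl fun j hj => ?_
        have hjm : j ≤ m := by simpa using Nat.lt_succ_iff.mp (Finset.mem_range.mp hj)
        rw [asc_succ]
        have : c + (j : ℝ) + ((m - j : ℕ) : ℝ) = c + m := by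
          rw [Nat.cast_sub hjm]; ring
        rw [this]; ring
      rw [Finset.sum_range_succ' _ m] at hT
      rw [← hT]
      congr 1
      · rw [Finset.sum_range_succ]
        simp only [Nat.choose_succ_self, Nat.cast_zero, mul_zero, zero_mul, neg_zero, add_zero]
        refine Finset.sum_congr rfl fun j hj => ?_
        have hjm : j < m := Finset.mem_range.mp hj
        have h1 : m - (j + 1) + 1 = m - j := by omega
        rw [h1]; ring
      · have h0 : m - 0 + 1 = m + 1 - 0 := by omega
        simp [asc, h0]
    rw [add_assoc, e1, e2, asc_succ]
    ring



lemma gammaMu_succ (μ : ℝ) (n : ℕ) :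
    gammaMu μ (n + 1) = ((n + 1 : ℝ) + 2 * μ * (if Odd (n + 1) then 1 else 0)) * gammaMu μ n := rfl

lemma gammaMu_parity (μ : ℝ) (j : ℕ) :
    gammaMu μ (2 * j) = 4 ^ j * j.factorial * asc (μ + 1/2) j ∧
    gammaMu μ (2 * j + 1) = 2 * (4 ^ j * j.factorial * asc (μ + 1/2) (j + 1)) := by
  induction j with
  | zero =>
    constructor
    · simp [gammaMu, asc]
    · have : Odd 1 := odd_one
      simp [gammaMu, asc, this]; ring
  | succ j ih =>
    obtain ⟨he, ho⟩ := ih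
    have hodd : ¬ Odd (2 * j + 1 + 1) := by simp [Nat.odd_iff]; omega
    have hodd2 : Odd (2 * j + 1 + 1 + 1) := by simp [Nat.odd_iff]
    have he' : gammaMu μ (2 * (j + 1)) = 4 ^ (j+1) * (j+1).factorial * asc (μ + 1/2) (j+1) := by
      have : 2 * (j + 1) = (2 * j + 1) + 1 := by ring
      rw [this, gammaMu_succ, ho, if_neg hodd, Nat.factorial_succ]
      push_cast
      ring
    refine ⟨he', ?_⟩
    have : 2 * (j + 1) + 1 = (2 * j + 1 + 1) + 1 := by ring
    rw [this, gammaMu_succ, if_pos hodd2]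
    have h2 : 2 * j + 2 = 2 * (j + 1) := by ring
    rw [h2, he']
    simp only [asc_succ]
    push_cast
    ring

lemma gammaMu_pos {μ : ℝ} (hμ : -(1/2 : ℝ) < μ) (n : ℕ) : 0 < gammaMu μ n := by
  induction n with
  | zero => norm_num [gammaMu]
  | succ n ih =>
    rw [gammaMu_succ]
    have : (0:ℝ) < (n + 1 : ℝ) + 2 * μ * (if Odd (n + 1) then 1 else 0) := by
      by_cases h : Odd (n + 1) <;> simp [h] <;> nlinarith [Nat.cast_nonneg (α := ℝ) n]
    positivity

lemma sum_split (f : ℕ → ℝ) (N : ℕ) :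
    ∑ k ∈ Finset.range (2 * N + 1), f k
      = ∑ j ∈ Finset.range (N + 1), f (2 * j) + ∑ j ∈ Finset.range N, f (2 * j + 1) := by
  induction N with
  | zero => simp
  | succ N ih =>
    have h1 : 2 * (N + 1) + 1 = (2 * N + 1) + 1 + 1 := by ring
    rw [h1, Finset.sum_range_succ, Finset.sum_range_succ, ih,
      Finset.sum_range_succ (fun j => f (2 * j)) (N+1), Finset.sum_range_succ (fun j => f (2 * j + 1)) N]
    have e1 : 2 * N + 1 = 2 * N + 1 := rfl
    have e2 : 2 * N + 1 + 1 = 2 * (N + 1) := by ring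
    rw [e2]
    ring

lemma asc_double (x : ℝ) (l : ℕ) :
    asc (2 * x) (2 * l) = 4 ^ l * asc x l * asc (x + 1/2) l := by
  induction l with
  | zero => simp [asc]
  | succ l ih =>
    have h1 : 2 * (l + 1) = (2 * l) + 1 + 1 := by ring
    rw [h1, asc_succ, asc_succ, ih, asc_succ, asc_succ]
    push_cast
    ring

lemma prod_Icc_asc (y : ℝ) (s l : ℕ) :
    ∏ k ∈ Finset.Icc (s + 1) (s + l), (y + (k : ℝ)) = asc (y + s + 1) l := by
  induction l with
  | zero => simp [asc]
  | succ l ih =>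
    have h1 : s + (l + 1) = (s + l) + 1 := by ring
    rw [h1, Finset.prod_Icc_succ_top (by omega), ih, asc_succ]
    push_cast
    ring

lemma even_term (μ : ℝ) (hμ : -(1/2 : ℝ) < μ) {m j : ℕ} (hj : j ≤ m) :
    gammaMu μ (2*m) / (gammaMu μ (2*m - 2*j) * gammaMu μ (2*j)) * asc (μ+1/2) m
      = (-1:ℝ)^j * (m.choose j) * asc (1/2 - μ - m) j * asc ((μ+1/2) + j) (m - j) := by
  set a : ℝ := μ + 1/2 with ha
  have hsub : 2*m - 2*j = 2*(m - j) := by omega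
  rw [hsub, (gammaMu_parity μ m).1, (gammaMu_parity μ (m-j)).1, (gammaMu_parity μ j).1]
  have hapos : (0:ℝ) < a := by rw [ha]; linarith
  have hA := asc_add a (m-j) j
  rw [show m - j + j = m by omega] at hA
  have hB := asc_add a j (m-j)
  rw [show j + (m - j) = m by omega] at hB
  have hrefl : asc (a + ((m-j : ℕ) : ℝ)) j = (-1)^j * asc (1/2 - μ - m) j := by
    rw [asc_reflect j (a + ((m-j : ℕ) : ℝ))]
    congr 2
    rw [Nat.cast_sub hj, ha]
    ring
  have hfac : (m.factorial : ℝ) = (m.choose j) * j.factorial * (m-j).factorial := by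
    exact_mod_cast (Nat.choose_mul_factorial_mul_factorial hj).symm
  have hpow : (4:ℝ)^m = 4^(m-j) * 4^j := by
    rw [← pow_add]; congr 1; omega
  have h1 : asc a (m-j) ≠ 0 := ne_of_gt (asc_pos hapos _)
  have h2 : asc a j ≠ 0 := ne_of_gt (asc_pos hapos _)
  have h3 : ((m-j).factorial : ℝ) ≠ 0 := by positivity
  have h4 : (j.factorial : ℝ) ≠ 0 := by positivity
  rw [div_mul_eq_mul_div, div_eq_iff (by positivity)]
  nth_rewrite 1 [hA]
  rw [hB, hrefl, hfac, hpow]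
  ring

lemma odd_term (μ : ℝ) (hμ : -(1/2 : ℝ) < μ) {m j : ℕ} (hj : j < m) :
    gammaMu μ (2*m) / (gammaMu μ (2*m - (2*j+1)) * gammaMu μ (2*j+1)) * asc (μ+1/2) m
      = (m : ℝ) * ((-1:ℝ)^j * ((m-1).choose j) * asc (1/2 - μ - m) j *
          asc (((μ+1/2)+1) + j) ((m-1) - j)) := by
  set a : ℝ := μ + 1/2 with ha
  have hsub : 2*m - (2*j+1) = 2*((m-1) - j) + 1 := by omega
  rw [hsub, (gammaMu_parity μ m).1, (gammaMu_parity μ ((m-1)-j)).2, (gammaMu_parity μ j).2]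
  have hapos : (0:ℝ) < a := by rw [ha]; linarith
  have hA := asc_add a (m-j) j
  rw [show m - j + j = m by omega] at hA
  have hB := asc_add a (j+1) (m-(j+1))
  rw [show j + 1 + (m - (j+1)) = m by omega] at hB
  have hrefl : asc (a + ((m-j : ℕ) : ℝ)) j = (-1)^j * asc (1/2 - μ - m) j := by
    rw [asc_reflect j (a + ((m-j : ℕ) : ℝ))]
    congr 2
    rw [Nat.cast_sub (le_of_lt hj), ha]
    ring
  have hmj : (m-1) - j + 1 = m - j := by omega
  have hm1 : m - (j+1) = (m-1) - j := by omega
  have hcast : a + ((j+1 : ℕ) : ℝ) = (a + 1) + (j : ℝ) := by push_cast; ring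
  have hfac : (m.factorial : ℝ) = m * (((m-1).choose j) * j.factorial * ((m-1)-j).factorial) := by
    have h5 : ((m-1).choose j) * j.factorial * ((m-1)-j).factorial = (m-1).factorial :=
      Nat.choose_mul_factorial_mul_factorial (by omega)
    have h6 : m.factorial = m * (m-1).factorial := by
      conv_lhs => rw [show m = (m-1) + 1 by omega]
      rw [Nat.factorial_succ]; congr 1; omega
    rw [h6, ← h5]; push_cast; ring
  have hpow : (4:ℝ)^m = 4^((m-1)-j) * 4^j * 4 := by
    rw [← pow_add, ← pow_succ]; congr 1; omega
  have h1 : asc a ((m-1)-j+1) ≠ 0 := ne_of_gt (asc_pos hapos _)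
  have h2 : asc a (j+1) ≠ 0 := ne_of_gt (asc_pos hapos _)
  have h3 : (((m-1)-j).factorial : ℝ) ≠ 0 := by positivity
  have h4 : (j.factorial : ℝ) ≠ 0 := by positivity
  rw [div_mul_eq_mul_div, div_eq_iff (by positivity)]
  rw [hmj] at h1 ⊢
  nth_rewrite 1 [hA]
  rw [hB, hrefl, hm1, hcast, hfac, hpow]
  ring

lemma key_sum (μ : ℝ) (hμ : -(1/2 : ℝ) < μ) (m : ℕ) (hm : 1 ≤ m) :
    (∑ k ∈ Finset.range (2*m+1),
        (-1:ℝ)^k * (gammaMu μ (2*m) / (gammaMu μ (2*m - k) * gammaMu μ k)))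
      * asc (μ+1/2) m
    = 2*μ * asc (2*μ + m + 1) (m-1) := by
  set a : ℝ := μ + 1/2 with ha
  set f : ℕ → ℝ := fun k => (-1:ℝ)^k * (gammaMu μ (2*m) / (gammaMu μ (2*m - k) * gammaMu μ k))
    with hf
  rw [sum_split f m, add_mul, Finset.sum_mul, Finset.sum_mul]
  have heven : ∑ j ∈ Finset.range (m+1), f (2*j) * asc a m = asc (2*μ + m) m := by
    have := cv m (1/2 - μ - m) a
    rw [show a - (1/2 - μ - (m:ℝ)) = 2*μ + m by rw [ha]; ring] at this
    rw [← this]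
    refine Finset.sum_congr rfl fun j hj => ?_
    have hjm : j ≤ m := by have := Finset.mem_range.mp hj; omega
    show (-1:ℝ)^(2*j) * (gammaMu μ (2*m) / (gammaMu μ (2*m - 2*j) * gammaMu μ (2*j)))
        * asc a m = _
    rw [pow_mul]
    norm_num
    exact even_term μ hμ hjm
  have hodd : ∑ j ∈ Finset.range m, f (2*j+1) * asc a m
      = -((m:ℝ) * asc (2*μ + m + 1) (m-1)) := by
    have hcv := cv (m-1) (1/2 - μ - m) (a+1)
    rw [show (a+1) - (1/2 - μ - (m:ℝ)) = 2*μ + m + 1 by rw [ha]; ring,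
      show (m-1) + 1 = m by omega] at hcv
    rw [← hcv, Finset.mul_sum, ← Finset.sum_neg_distrib]
    refine Finset.sum_congr rfl fun j hj => ?_
    have hjm : j < m := Finset.mem_range.mp hj
    show (-1:ℝ)^(2*j+1) * (gammaMu μ (2*m) / (gammaMu μ (2*m - (2*j+1)) * gammaMu μ (2*j+1)))
        * asc a m = _
    rw [pow_succ, pow_mul]
    norm_num
    exact odd_term μ hμ hjm
  rw [heven, hodd]
  have hstep : asc (2*μ + m) m = (2*μ + m) * asc (2*μ + m + 1) (m-1) := by
    conv_lhs => rw [show m = (m-1) + 1 by omega]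
    rw [asc_succ', show m - 1 + 1 = m by omega]
  rw [hstep]
  ring





theorem pMu_four_n (μ : ℝ) (hμ : -(1/2 : ℝ) < μ) (n : ℕ) (hn : 1 ≤ n) :
    pMu μ (4 * n) 1 (-1) =
      ((μ * 2 ^ (2 * n) * (∏ k ∈ Finset.Icc (n + 1) (2 * n - 1), (μ + (k : ℝ))) /
        (∏ k ∈ Finset.Icc 1 n, (μ + (k : ℝ) - 1/2)) : ℝ) : ℂ) := by
  set a : ℝ := μ + 1/2 with ha
  have hapos : (0:ℝ) < a := by rw [ha]; linarith
  -- Step 1: reduce to a real sum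
  have hreal : pMu μ (4*n) 1 (-1)
      = Complex.ofReal (∑ k ∈ Finset.range (2*(2*n)+1),
          (-1:ℝ)^k * (gammaMu μ (2*(2*n)) / (gammaMu μ (2*(2*n) - k) * gammaMu μ k))) := by
    rw [pMu, show 2*(2*n)+1 = 4*n+1 by ring]
    push_cast
    refine Finset.sum_congr rfl fun k hk => ?_
    have hk4 : k ≤ 4*n := by have := Finset.mem_range.mp hk; omega
    have hb : binomMu μ (4*n) (k : ℤ) =
        gammaMu μ (4*n) / (gammaMu μ (4*n - k) * gammaMu μ k) := by
      rw [binomMu, if_pos ⟨Int.natCast_nonneg k, by exact_mod_cast hk4⟩, Int.toNat_natCast]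
    have hpow : (-1:ℂ)^(4*n - k) = ((-1:ℝ)^k : ℂ) := by
      push_cast
      rw [neg_one_pow_eq_pow_mod_two, show (4*n - k) % 2 = k % 2 by omega,
        ← neg_one_pow_eq_pow_mod_two]
    rw [hb, one_pow, mul_one, hpow]
    push_cast
    ring
  rw [hreal]
  congr 1
  -- Step 2: use key_sum
  have hkey := key_sum μ hμ (2*n) (by omega)
  obtain ⟨N, rfl⟩ : ∃ N, n = N + 1 := ⟨n - 1, by omega⟩
  have hS : (∑ k ∈ Finset.range (2*(2*(N+1))+1),
      (-1:ℝ)^k * (gammaMu μ (2*(2*(N+1))) / (gammaMu μ (2*(2*(N+1)) - k) * gammaMu μ k)))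
      = 2*μ * asc (2*μ + (2*(N+1) : ℕ) + 1) (2*(N+1) - 1) / asc a (2*(N+1)) := by
    rw [eq_div_iff (ne_of_gt (asc_pos hapos _))]
    exact hkey
  rw [hS]
  -- Step 3: products to asc
  have hP2 : ∏ k ∈ Finset.Icc 1 (N+1), (μ + (k : ℝ) - 1/2) = asc a (N+1) := by
    have h := prod_Icc_asc (μ - 1/2) 0 (N+1)
    rw [show μ - 1/2 + ((0:ℕ):ℝ) + 1 = a by rw [ha]; push_cast; ring] at h
    simp only [Nat.zero_add] at h
    rw [← h]
    refine Finset.prod_congr rfl fun k hk => by ring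
  have hP1 : ∏ k ∈ Finset.Icc ((N+1) + 1) (2*(N+1) - 1), (μ + (k : ℝ))
      = asc (μ + (N+1) + 1) N := by
    have := prod_Icc_asc μ (N+1) N
    rw [show (N+1) + N = 2*(N+1) - 1 by omega] at this
    rw [this]
    push_cast
    ring_nf
  rw [hP2, hP1]
  -- Step 4: pure asc algebra
  have h1 : asc a (2*(N+1)) = asc a (N+1) * asc (a + (N+1:ℕ)) (N+1) := by
    rw [show 2*(N+1) = (N+1) + (N+1) by ring, asc_add]
  have hy : (0:ℝ) < a + ((N+1:ℕ):ℝ) := by positivity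
  have h2 : asc (2*μ + ((2*(N+1) : ℕ) : ℝ) + 1) (2*(N+1) - 1)
      = 4^N * asc (a + (N+1:ℕ)) N * asc (μ + (N+1) + 1) N
        * (2 * (a + (N+1:ℕ)) + 2*N) := by
    have hbase : 2*μ + ((2*(N+1) : ℕ) : ℝ) + 1 = 2 * (a + ((N+1:ℕ):ℝ)) := by
      rw [ha]; push_cast; ring
    rw [hbase, show 2*(N+1) - 1 = 2*N + 1 by omega, asc_succ, asc_double]
    have : (a + ((N+1:ℕ):ℝ)) + 1/2 = μ + (N+1) + 1 := by rw [ha]; push_cast; ring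
    rw [this]
    push_cast
    ring
  have h3 : asc (a + (N+1:ℕ)) (N+1) = asc (a + (N+1:ℕ)) N * ((a + (N+1:ℕ)) + N) :=
    asc_succ _ N
  rw [h2, h1, h3]
  have e1 : asc a (N+1) ≠ 0 := ne_of_gt (asc_pos hapos _)
  have e2 : asc (a + (N+1:ℕ)) N ≠ 0 := ne_of_gt (asc_pos hy _)
  have e3 : (a + ((N+1:ℕ):ℝ)) + N ≠ 0 := by positivity
  have hpow42 : (2:ℝ)^(2*(N+1)) = 4^(N+1) := by
    rw [pow_mul]; norm_num
  rw [hpow42]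
  rw [ha] at e1 e2 e3 ⊢
  push_cast at e1 e2 e3 ⊢
  rw [div_eq_div_iff (mul_ne_zero e1 (mul_ne_zero e2 e3)) e1]
  ring_nf
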